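/- In the 3-SAT reduction graph of Theorem 1, if the boolean formula F = F_1 ∧ … ∧ F_m over n variables is satisfiable by assignment τ, then there exist two arc-disjoint s-f paths P_1 and P_2 such that P_1 traverses exactly one side (upper or lower) of each variable lobe according to τ and has cost 3m + n, while P_2 traverses the clause arcs (s,y_1), (z_j, y_{j+1}) for j < m, (z_m, f) and, for each clause, a satisfied-literal subpath, and has cost 0; their total cost is 3m + n. -/

import Mathlib

/-- Nodes of the 3-SAT reduction graph of Theorem 1: `w 0 = s`, …,
`w n = f` separate the `n` variable lobes; `u j t b` / `v j t b` are the
endpoints of the segment of the occurrence (clause `j`, slot `t`) on side `b`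
of its lobe (side `true` = upper/positive-literal side, side `false` =
lower/negated-literal side); `y j`, `z j` are the clause nodes. -/
inductive RNode (n m : ℕ) : Type
  | w : Fin (n + 1) → RNode n m
  | u : Fin m → Fin 3 → Bool → RNode n m
  | v : Fin m → Fin 3 → Bool → RNode n m
  | y : Fin m → RNode n m
  | z : Fin m → RNode n m
  deriving DecidableEq

/-- The occurrences (clause, slot) of variable `i`, in a fixed order. -/
def occList {n m : ℕ} (Cl : Fin m → Fin 3 → Fin n × Bool) (i : Fin n) :
    List (Fin m × Fin 3) :=
  ((List.finRange m).flatMap fun j => (List.finRange 3).map fun t => (j, t)).filter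
    fun p => decide ((Cl p.1 p.2).1 = i)

/-- Arcs of the reduction graph: each lobe `i` chains, on each of its two
sides, the segments of the occurrences of variable `i` from `w i` to
`w (i+1)`; the clause chain `s → y 0 → … → z (m-1) → f` with connectors from
`y j` to (and from `v` back to `z j` of) the occurrence segment lying on the
side matching the literal's polarity `(Cl j t).2`. -/
inductive RArc {n m : ℕ} (Cl : Fin m → Fin 3 → Fin n × Bool) :
    RNode n m → RNode n m → Prop
  | entry (i : Fin n) (side : Bool) (j : Fin m) (t : Fin 3)
      (h : (occList Cl i).head? = some (j, t)) :
      RArc Cl (.w i.castSucc) (.u j t side)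
  | seg (j : Fin m) (t : Fin 3) (side : Bool) :
      RArc Cl (.u j t side) (.v j t side)
  | chain (i : Fin n) (side : Bool) (j : Fin m) (t : Fin 3) (j' : Fin m)
      (t' : Fin 3) (q : ℕ) (h1 : (occList Cl i)[q]? = some (j, t))
      (h2 : (occList Cl i)[q + 1]? = some (j', t')) :
      RArc Cl (.v j t side) (.u j' t' side)
  | exits (i : Fin n) (side : Bool) (j : Fin m) (t : Fin 3)
      (h : (occList Cl i).getLast? = some (j, t)) :
      RArc Cl (.v j t side) (.w i.succ)
  | sy (j : Fin m) (h : (j : ℕ) = 0) : RArc Cl (.w 0) (.y j)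
  | zy (j j' : Fin m) (h : (j' : ℕ) = (j : ℕ) + 1) : RArc Cl (.z j) (.y j')
  | zf (j : Fin m) (h : (j : ℕ) = m - 1) : RArc Cl (.z j) (.w (Fin.last n))
  | yu (j : Fin m) (t : Fin 3) : RArc Cl (.y j) (.u j t (Cl j t).2)
  | vz (j : Fin m) (t : Fin 3) : RArc Cl (.v j t (Cl j t).2) (.z j)

/-- Arc costs: the lobe-structure arcs `w→u`, `v→u`, `v→w` cost 1; all other
arcs (segments, clause chain and connectors) cost 0. -/
def rcost {n m : ℕ} : RNode n m × RNode n m → ℕ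
  | (.w _, .u _ _ _) => 1
  | (.v _ _ _, .u _ _ _) => 1
  | (.v _ _ _, .w _) => 1
  | _ => 0

/-- The arcs traversed by a path given as a list of nodes. -/
def pathArcs {n m : ℕ} (L : List (RNode n m)) : List (RNode n m × RNode n m) :=
  L.zip L.tail

def rPathCost {n m : ℕ} (L : List (RNode n m)) : ℕ :=
  ((pathArcs L).map rcost).sum

/-- A simple directed path from `s = w 0` to `f = w n`. -/
def IsSFPath {n m : ℕ} (Cl : Fin m → Fin 3 → Fin n × Bool)
    (L : List (RNode n m)) : Prop :=
  List.Chain' (RArc Cl) L ∧ L.head? = some (.w 0) ∧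
    L.getLast? = some (.w (Fin.last n)) ∧ L.Nodup

namespace Stmt14Aux

open List

variable {n m : ℕ}

/-! ### pathArcs basics -/

lemma pathArcs_cons_cons (a b : RNode n m) (l : List (RNode n m)) :
    pathArcs (a :: b :: l) = (a, b) :: pathArcs (b :: l) := rfl

lemma pathArcs_single (a : RNode n m) : pathArcs [a] = [] := rfl

lemma rPathCost_cons_cons (a b : RNode n m) (l : List (RNode n m)) :
    rPathCost (a :: b :: l) = rcost (a, b) + rPathCost (b :: l) := by
  simp [rPathCost, pathArcs_cons_cons]

lemma rPathCost_cons_of_head (a x : RNode n m) {l : List (RNode n m)}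
    (h : l.head? = some x) :
    rPathCost (a :: l) = rcost (a, x) + rPathCost l := by
  cases l with
  | nil => simp at h
  | cons b l' =>
    simp only [head?_cons, Option.some_inj] at h
    subst h
    exact rPathCost_cons_cons _ _ _

lemma mem_pathArcs_cons {e : RNode n m × RNode n m} {l : List (RNode n m)}
    (a : RNode n m) (h : e ∈ pathArcs l) : e ∈ pathArcs (a :: l) := by
  cases l with
  | nil => simp [pathArcs] at h
  | cons b l' => rw [pathArcs_cons_cons]; exact mem_cons_of_mem _ h

lemma mem_pathArcs_cons_elim {e : RNode n m × RNode n m} {a : RNode n m}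
    {l : List (RNode n m)} (h : e ∈ pathArcs (a :: l)) :
    (∃ x, l.head? = some x ∧ e = (a, x)) ∨ e ∈ pathArcs l := by
  cases l with
  | nil => simp [pathArcs] at h
  | cons b l' =>
    rw [pathArcs_cons_cons, mem_cons] at h
    rcases h with h | h
    · exact Or.inl ⟨b, rfl, h⟩
    · exact Or.inr h

lemma mem_pathArcs_append {e : RNode n m × RNode n m} :
    ∀ {A B : List (RNode n m)}, e ∈ pathArcs (A ++ B) →
      e ∈ pathArcs A ∨ e ∈ pathArcs B ∨
        ∃ a b, A.getLast? = some a ∧ B.head? = some b ∧ e = (a, b) := by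
  intro A
  induction A with
  | nil => intro B h; exact Or.inr (Or.inl h)
  | cons a A' ih =>
    intro B h
    cases A' with
    | nil =>
      cases B with
      | nil => rw [append_nil, pathArcs_single] at h; simp at h
      | cons b B' =>
        rcases mem_pathArcs_cons_elim h with ⟨x, hx, he⟩ | h
        · obtain rfl : b = x := by simpa using hx
          exact Or.inr (Or.inr ⟨a, b, rfl, rfl, he⟩)
        · exact Or.inr (Or.inl h)
    | cons a2 A'' =>
      rw [cons_append, cons_append, pathArcs_cons_cons, mem_cons] at h
      rcases h with h | h
      · exact Or.inl (by rw [pathArcs_cons_cons, h]; exact mem_cons_self)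
      · rcases ih (by simpa using h) with h' | h' | ⟨x, y, hx, hy, he⟩
        · exact Or.inl (mem_pathArcs_cons a h')
        · exact Or.inr (Or.inl h')
        · exact Or.inr (Or.inr ⟨x, y, by rw [getLast?_cons_cons]; exact hx, hy, he⟩)

/-! ### occList basics -/

lemma mem_occList {Cl : Fin m → Fin 3 → Fin n × Bool} {i : Fin n}
    {p : Fin m × Fin 3} : p ∈ occList Cl i ↔ (Cl p.1 p.2).1 = i := by
  unfold occList
  rw [mem_filter]
  constructor
  · rintro ⟨-, h⟩; exact of_decide_eq_true h
  · intro h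
    refine ⟨?_, decide_eq_true h⟩
    simp only [mem_flatMap, mem_map, mem_finRange, true_and]
    exact ⟨p.1, p.2, rfl⟩

lemma nodup_occList (Cl : Fin m → Fin 3 → Fin n × Bool) (i : Fin n) :
    (occList Cl i).Nodup := by
  apply Nodup.filter
  refine nodup_flatMap.2 ⟨?_, ?_⟩
  · intro j _
    exact (nodup_finRange 3).map (fun a b hab => by simpa using hab)
  · refine (nodup_finRange m).imp ?_
    intro a b hab x hx hy
    simp only [mem_map] at hx hy
    obtain ⟨t, -, rfl⟩ := hx
    obtain ⟨t', -, h⟩ := hy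
    exact hab (congrArg Prod.fst h).symm

lemma occList_ne_nil {Cl : Fin m → Fin 3 → Fin n × Bool}
    (hocc : ∀ i : Fin n, ∃ j t, (Cl j t).1 = i) (i : Fin n) :
    occList Cl i ≠ [] := by
  obtain ⟨j, t, h⟩ := hocc i
  exact ne_nil_of_mem ((mem_occList (p := (j, t))).2 h)

lemma getLast?_of_drop_singleton {Cl : Fin m → Fin 3 → Fin n × Bool}
    {i : Fin n} {q : ℕ} {p : Fin m × Fin 3}
    (h : (occList Cl i).drop q = [p]) : (occList Cl i).getLast? = some p := by
  set l := occList Cl i with hl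
  have hlen : l.length - q = 1 := by rw [← length_drop, h]; rfl
  have hq : q < l.length := by
    by_contra hc
    rw [drop_eq_nil_of_le (by omega)] at h
    simp at h
  have : l[q]? = some p := by
    have := List.getElem?_drop (xs := l) (i := q) (j := 0)
    rw [h] at this
    simpa using this.symm
  rw [getLast?_eq_getElem?, show l.length - 1 = q by omega]
  exact this

/-! ### lobe flats -/

def lobeFlat (b : Bool) (O : List (Fin m × Fin 3)) : List (RNode n m) :=
  O.flatMap fun p => [RNode.u p.1 p.2 b, RNode.v p.1 p.2 b]

lemma lobeFlat_cons (b : Bool) (p : Fin m × Fin 3) (O : List (Fin m × Fin 3)) :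
    lobeFlat (n := n) b (p :: O) =
      RNode.u p.1 p.2 b :: RNode.v p.1 p.2 b :: lobeFlat b O := rfl

lemma lobe_aux (Cl : Fin m → Fin 3 → Fin n × Bool) (i : Fin n) (b : Bool) :
    ∀ (O : List (Fin m × Fin 3)), ∀ q : ℕ, (occList Cl i).drop q = O → O ≠ [] →
      List.Chain' (RArc Cl) (lobeFlat (n := n) b O) ∧
      ∃ p, (occList Cl i).getLast? = some p ∧
        (lobeFlat (n := n) b O).getLast? = some (RNode.v p.1 p.2 b) := by
  intro O
  induction O with
  | nil => intro q _ hne; exact absurd rfl hne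
  | cons p O' ih =>
    intro q hq _
    cases O' with
    | nil =>
      have hlast := getLast?_of_drop_singleton hq
      refine ⟨?_, p, hlast, by simp [lobeFlat]⟩
      exact isChain_cons_cons.2 ⟨RArc.seg p.1 p.2 b, isChain_singleton _⟩
    | cons p' O'' =>
      have hq0 : (occList Cl i)[q]? = some p := by
        have := List.getElem?_drop (xs := occList Cl i) (i := q) (j := 0)
        rw [hq] at this; simpa using this.symm
      have hq1 : (occList Cl i)[q + 1]? = some p' := by
        have := List.getElem?_drop (xs := occList Cl i) (i := q) (j := 1)
        rw [hq] at this; simpa using this.symm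
      have htail : (occList Cl i).drop (q + 1) = p' :: O'' := by
        rw [← List.tail_drop, hq]; rfl
      obtain ⟨ihc, pl, hpl, hl⟩ := ih (q + 1) htail (by simp)
      constructor
      · rw [lobeFlat_cons]
        refine isChain_cons_cons.2 ⟨RArc.seg p.1 p.2 b, ?_⟩
        rw [lobeFlat_cons]
        refine isChain_cons_cons.2 ⟨RArc.chain i b p.1 p.2 p'.1 p'.2 q hq0 hq1, ?_⟩
        rw [lobeFlat_cons] at ihc
        exact ihc
      · refine ⟨pl, hpl, ?_⟩
        rw [lobeFlat_cons, getLast?_cons_cons]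
        exact hl

lemma lobeFlat_nodup (b : Bool) :
    ∀ {O : List (Fin m × Fin 3)}, O.Nodup → (lobeFlat (n := n) b O).Nodup := by
  intro O
  induction O with
  | nil => intro _; simp [lobeFlat]
  | cons p O' ih =>
    intro h
    rw [nodup_cons] at h
    rw [lobeFlat_cons, nodup_cons, nodup_cons]
    refine ⟨?_, ?_, ih h.2⟩
    · rw [mem_cons]
      rintro (hc | hc)
      · cases hc
      · obtain ⟨p', hp', hx⟩ := mem_flatMap.1 hc
        simp only [mem_cons, not_mem_nil, or_false] at hx
        rcases hx with hx | hx
        · obtain ⟨h1, h2, -⟩ := RNode.u.inj hx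
          exact h.1 (by rwa [show p = p' from Prod.ext h1 h2])
        · cases hx
    · intro hc
      obtain ⟨p', hp', hx⟩ := mem_flatMap.1 hc
      simp only [mem_cons, not_mem_nil, or_false] at hx
      rcases hx with hx | hx
      · cases hx
      · obtain ⟨h1, h2, -⟩ := RNode.v.inj hx
        exact h.1 (by rwa [show p = p' from Prod.ext h1 h2])

lemma lobeFlat_mem {b : Bool} {O : List (Fin m × Fin 3)} {x : RNode n m}
    (h : x ∈ lobeFlat b O) :
    ∃ p ∈ O, x = RNode.u p.1 p.2 b ∨ x = RNode.v p.1 p.2 b := by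
  obtain ⟨p, hp, hx⟩ := mem_flatMap.1 h
  simp only [mem_cons, not_mem_nil, or_false] at hx
  exact ⟨p, hp, hx⟩

lemma lobeFlat_arcs {b : Bool} :
    ∀ {O : List (Fin m × Fin 3)} {e : RNode n m × RNode n m},
      e ∈ pathArcs (lobeFlat b O) →
      (∃ p ∈ O, e = (RNode.u p.1 p.2 b, RNode.v p.1 p.2 b)) ∨
      (∃ p p' : Fin m × Fin 3,
        e = (RNode.v p.1 p.2 b, RNode.u p'.1 p'.2 b)) := by
  intro O
  induction O with
  | nil => intro e h; simp [lobeFlat, pathArcs] at h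
  | cons p O' ih =>
    intro e h
    rw [lobeFlat_cons, pathArcs_cons_cons, mem_cons] at h
    rcases h with h | h
    · exact Or.inl ⟨p, mem_cons_self, h⟩
    · cases O' with
      | nil =>
        simp only [lobeFlat, flatMap_nil, pathArcs_single] at h
        simp at h
      | cons p2 O'' =>
        rw [lobeFlat_cons, pathArcs_cons_cons, mem_cons] at h
        rcases h with h | h
        · exact Or.inr ⟨p, p2, h⟩
        · rcases ih (by rw [lobeFlat_cons]; exact h) with ⟨p3, hp3, he⟩ | he
          · exact Or.inl ⟨p3, mem_cons_of_mem _ hp3, he⟩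
          · exact Or.inr he

lemma lobeFlat_cost (b : Bool) :
    ∀ (O : List (Fin m × Fin 3)) (R : List (RNode n m)),
      (∃ iv, R.head? = some (RNode.w iv)) →
      rPathCost (lobeFlat b O ++ R) = O.length + rPathCost R := by
  intro O
  induction O with
  | nil => intro R _; simp [lobeFlat]
  | cons p O' ih =>
    intro R hR
    rw [lobeFlat_cons, cons_append, cons_append]
    rw [rPathCost_cons_cons]
    have hcost : rcost ((RNode.u p.1 p.2 b : RNode n m), RNode.v p.1 p.2 b) = 0 := rfl
    rw [hcost]
    cases O' with
    | nil =>
      obtain ⟨iv, hiv⟩ := hR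
      cases R with
      | nil => simp at hiv
      | cons r R' =>
        obtain rfl : r = RNode.w iv := by simpa using hiv
        rw [show (lobeFlat b [] : List (RNode n m)) = [] from rfl, nil_append,
          rPathCost_cons_cons]
        simp [rcost, rPathCost, pathArcs]
    | cons p2 O'' =>
      rw [lobeFlat_cons]
      rw [show (RNode.v p.1 p.2 b :: ((RNode.u p2.1 p2.2 b :: RNode.v p2.1 p2.2 b :: lobeFlat b O'') ++ R)) = RNode.v p.1 p.2 b :: RNode.u p2.1 p2.2 b :: ((RNode.v p2.1 p2.2 b :: lobeFlat b O'') ++ R) from rfl]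
      rw [rPathCost_cons_cons]
      have h2 : rcost ((RNode.v p.1 p.2 b : RNode n m), RNode.u p2.1 p2.2 b) = 1 := rfl
      rw [h2]
      have := ih R hR
      rw [lobeFlat_cons, cons_append] at this
      rw [this]
      simp [length_cons]
      omega

/-! ### the lobe path L1 -/

def tailPath (Cl : Fin m → Fin 3 → Fin n × Bool) (τ : Fin n → Bool) (k : ℕ) :
    List (RNode n m) :=
  if h : k < n then
    RNode.w (⟨k, h⟩ : Fin n).castSucc ::
      (lobeFlat (!(τ ⟨k, h⟩)) (occList Cl ⟨k, h⟩) ++ tailPath Cl τ (k + 1))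
  else [RNode.w (Fin.last n)]
termination_by n - k

lemma tailPath_ne_nil (Cl : Fin m → Fin 3 → Fin n × Bool) (τ : Fin n → Bool)
    (k : ℕ) : tailPath Cl τ k ≠ [] := by
  rw [tailPath]; split <;> simp

lemma tailPath_head (Cl : Fin m → Fin 3 → Fin n × Bool) (τ : Fin n → Bool)
    {k : ℕ} (hk : k ≤ n) :
    (tailPath Cl τ k).head? = some (RNode.w ⟨k, by omega⟩) := by
  rw [tailPath]
  split
  · rfl
  · next h =>
    obtain rfl : k = n := le_antisymm hk (not_lt.1 h)
    rfl

lemma tailPath_chain (Cl : Fin m → Fin 3 → Fin n × Bool) (τ : Fin n → Bool)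
    (hocc : ∀ i : Fin n, ∃ j t, (Cl j t).1 = i) :
    ∀ d k, n - k ≤ d → k ≤ n → List.Chain' (RArc Cl) (tailPath Cl τ k) := by
  intro d
  induction d with
  | zero =>
    intro k h1 h2
    rw [tailPath, dif_neg (by omega)]
    exact isChain_singleton _
  | succ d ih =>
    intro k h1 h2
    rw [tailPath]
    split
    · next h =>
      set i : Fin n := ⟨k, h⟩ with hidef
      obtain ⟨p0, O', hO⟩ := List.exists_cons_of_ne_nil (occList_ne_nil hocc i)
      obtain ⟨hcf, pl, hpl, hlast⟩ :=
        lobe_aux Cl i (!(τ i)) (occList Cl i) 0 (by rw [drop_zero]) (occList_ne_nil hocc i)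
      refine isChain_cons.2 ⟨?_, ?_⟩
      · intro ynode hy
        rw [hO, lobeFlat_cons, cons_append, head?_cons] at hy
        simp only [Option.mem_def, Option.some_inj] at hy
        subst hy
        exact RArc.entry i (!(τ i)) p0.1 p0.2 (by rw [hO]; rfl)
      · refine isChain_append.2 ⟨hcf, ih (k+1) (by omega) (by omega), ?_⟩
        intro x hx ynode hy
        rw [hlast] at hx
        simp only [Option.mem_def, Option.some_inj] at hx
        subst hx
        rw [tailPath_head Cl τ (by omega : k + 1 ≤ n)] at hy
        simp only [Option.mem_def, Option.some_inj] at hy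
        subst hy
        have hsucc : (RNode.w (⟨k+1, by omega⟩ : Fin (n+1)) : RNode n m) = RNode.w i.succ := rfl
        rw [hsucc]
        exact RArc.exits i (!(τ i)) pl.1 pl.2 hpl
    · exact isChain_singleton _

lemma tailPath_getLast (Cl : Fin m → Fin 3 → Fin n × Bool) (τ : Fin n → Bool) :
    ∀ d k, n - k ≤ d →
      (tailPath Cl τ k).getLast? = some (RNode.w (Fin.last n)) := by
  intro d; induction d with
  | zero => intro k h; rw [tailPath, dif_neg (by omega)]; rfl
  | succ d ih =>
    intro k h
    rw [tailPath]
    split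
    · next hk =>
      rw [show (RNode.w (⟨k, hk⟩ : Fin n).castSucc :: (lobeFlat (!(τ ⟨k, hk⟩)) (occList Cl ⟨k, hk⟩) ++ tailPath Cl τ (k+1)) : List (RNode n m)) = ([RNode.w (⟨k, hk⟩ : Fin n).castSucc] ++ lobeFlat (!(τ ⟨k, hk⟩)) (occList Cl ⟨k, hk⟩)) ++ tailPath Cl τ (k+1) from by simp]
      rw [List.getLast?_append_of_ne_nil _ (tailPath_ne_nil Cl τ (k+1))]
      exact ih (k+1) (by omega)
    · rfl

lemma tailPath_mem (Cl : Fin m → Fin 3 → Fin n × Bool) (τ : Fin n → Bool) :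
    ∀ d k, n - k ≤ d → k ≤ n → ∀ x ∈ tailPath Cl τ k,
      (∃ iv : Fin (n+1), k ≤ (iv : ℕ) ∧ x = RNode.w iv) ∨
      (∃ j t, k ≤ ((Cl j t).1 : ℕ) ∧
        (x = RNode.u j t (!(τ (Cl j t).1)) ∨ x = RNode.v j t (!(τ (Cl j t).1)))) := by
  intro d; induction d with
  | zero =>
    intro k h1 h2 x hx
    rw [tailPath, dif_neg (by omega)] at hx
    simp only [mem_singleton] at hx
    exact Or.inl ⟨Fin.last n, by simpa using h2, hx⟩
  | succ d ih =>
    intro k h1 h2 x hx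
    rw [tailPath] at hx
    split at hx
    · next hk =>
      rw [mem_cons, mem_append] at hx
      rcases hx with rfl | hx | hx
      · exact Or.inl ⟨_, by simp, rfl⟩
      · obtain ⟨p, hp, hx⟩ := lobeFlat_mem hx
        have hv : (Cl p.1 p.2).1 = ⟨k, hk⟩ := mem_occList.1 hp
        refine Or.inr ⟨p.1, p.2, by rw [hv], by rw [hv]; exact hx⟩
      · rcases ih (k+1) (by omega) (by omega) x hx with ⟨iv, hiv, hx⟩ | ⟨j, t, hjt, hx⟩
        · exact Or.inl ⟨iv, by omega, hx⟩
        · exact Or.inr ⟨j, t, by omega, hx⟩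
    · simp only [mem_singleton] at hx
      exact Or.inl ⟨Fin.last n, by simpa using h2, hx⟩

lemma tailPath_nodup (Cl : Fin m → Fin 3 → Fin n × Bool) (τ : Fin n → Bool) :
    ∀ d k, n - k ≤ d → k ≤ n → (tailPath Cl τ k).Nodup := by
  intro d; induction d with
  | zero => intro k h1 h2; rw [tailPath, dif_neg (by omega)]; simp
  | succ d ih =>
    intro k h1 h2
    rw [tailPath]
    split
    · next hk =>
      rw [nodup_cons, nodup_append]
      refine ⟨?_, lobeFlat_nodup _ (nodup_occList Cl ⟨k, hk⟩),
        ih (k+1) (by omega) (by omega), ?_⟩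
      · rw [mem_append]
        rintro (hc | hc)
        · obtain ⟨p, -, hx | hx⟩ := lobeFlat_mem hc <;> cases hx
        · rcases tailPath_mem Cl τ d (k+1) (by omega) (by omega) _ hc with
            ⟨iv, hiv, hx⟩ | ⟨j, t, -, hx | hx⟩
          · have h' := RNode.w.inj hx
            have : (iv : ℕ) = k := by rw [← h']; simp
            omega
          · cases hx
          · cases hx
      · intro x hx y hx' hxy
        subst hxy
        obtain ⟨p, hp, hxe⟩ := lobeFlat_mem hx
        have hv : (Cl p.1 p.2).1 = ⟨k, hk⟩ := mem_occList.1 hp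
        rcases tailPath_mem Cl τ d (k+1) (by omega) (by omega) x hx' with
          ⟨iv, hiv, hx2⟩ | ⟨j, t, hjt, hx2 | hx2⟩
        · rcases hxe with rfl | rfl <;> cases hx2
        · rcases hxe with rfl | rfl
          · obtain ⟨h1', h2', -⟩ := RNode.u.inj hx2
            rw [← h1', ← h2', hv] at hjt
            simp at hjt
          · cases hx2
        · rcases hxe with rfl | rfl
          · cases hx2
          · obtain ⟨h1', h2', -⟩ := RNode.v.inj hx2
            rw [← h1', ← h2', hv] at hjt
            simp at hjt
    · simp

lemma tailPath_cost (Cl : Fin m → Fin 3 → Fin n × Bool) (τ : Fin n → Bool)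
    (hocc : ∀ i : Fin n, ∃ j t, (Cl j t).1 = i) :
    ∀ d k, n - k ≤ d → k ≤ n →
      rPathCost (tailPath Cl τ k) =
        (((List.finRange n).drop k).map fun i => (occList Cl i).length + 1).sum := by
  intro d; induction d with
  | zero =>
    intro k h1 h2
    rw [tailPath, dif_neg (by omega)]
    rw [List.drop_eq_nil_of_le (by simp only [List.length_finRange]; omega)]
    simp [rPathCost, pathArcs]
  | succ d ih =>
    intro k h1 h2
    rw [tailPath]
    split
    · next hk =>
      set i : Fin n := ⟨k, hk⟩ with hidef
      obtain ⟨p0, O', hO⟩ := List.exists_cons_of_ne_nil (occList_ne_nil hocc i)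
      have hhead : (lobeFlat (!(τ i)) (occList Cl i) ++ tailPath Cl τ (k+1)).head?
          = some (RNode.u p0.1 p0.2 (!(τ i))) := by
        rw [hO, lobeFlat_cons, cons_append, head?_cons]
      rw [rPathCost_cons_of_head _ _ hhead]
      have hflat := lobeFlat_cost (!(τ i)) (occList Cl i) (tailPath Cl τ (k+1))
        ⟨_, tailPath_head Cl τ (by omega : k + 1 ≤ n)⟩
      rw [hflat, ih (k+1) (by omega) (by omega)]
      have hdrop : (List.finRange n).drop k = i :: (List.finRange n).drop (k+1) := by
        rw [List.drop_eq_getElem_cons (by simpa using hk)]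
        congr 1
        exact List.getElem_finRange ..
      rw [hdrop, map_cons, sum_cons]
      have hrc : rcost ((RNode.w i.castSucc : RNode n m), RNode.u p0.1 p0.2 (!(τ i))) = 1 := rfl
      rw [hrc]
      omega
    · rw [List.drop_eq_nil_of_le (by simp only [List.length_finRange]; omega)]
      simp [rPathCost, pathArcs]

lemma tailPath_arcs (Cl : Fin m → Fin 3 → Fin n × Bool) (τ : Fin n → Bool)
    (hocc : ∀ i : Fin n, ∃ j t, (Cl j t).1 = i) :
    ∀ d k, n - k ≤ d → k ≤ n → ∀ e ∈ pathArcs (tailPath Cl τ k),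
      (∃ iv j t b, e = (RNode.w iv, RNode.u j t b)) ∨
      (∃ j t, e = (RNode.u j t (!(τ (Cl j t).1)), RNode.v j t (!(τ (Cl j t).1)))) ∨
      (∃ j t b j' t' b', e = (RNode.v j t b, RNode.u j' t' b')) ∨
      (∃ j t b iv, e = (RNode.v j t b, RNode.w iv)) := by
  intro d; induction d with
  | zero =>
    intro k h1 h2 e he
    rw [tailPath, dif_neg (by omega), pathArcs_single] at he
    simp at he
  | succ d ih =>
    intro k h1 h2 e he
    rw [tailPath] at he
    split at he
    · next hk =>
      set i : Fin n := ⟨k, hk⟩ with hidef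
      rcases mem_pathArcs_cons_elim he with ⟨x, hx, rfl⟩ | he
      · obtain ⟨p0, O', hO⟩ := List.exists_cons_of_ne_nil (occList_ne_nil hocc i)
        rw [hO, lobeFlat_cons, cons_append, head?_cons, Option.some_inj] at hx
        subst hx
        exact Or.inl ⟨_, _, _, _, rfl⟩
      · rcases mem_pathArcs_append he with hf | ht | ⟨a, bb, ha, hb, rfl⟩
        · rcases lobeFlat_arcs hf with ⟨p, hp, rfl⟩ | ⟨p, p', rfl⟩
          · have hv : (Cl p.1 p.2).1 = i := mem_occList.1 hp
            exact Or.inr (Or.inl ⟨p.1, p.2, by rw [hv]⟩)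
          · exact Or.inr (Or.inr (Or.inl ⟨_, _, _, _, _, _, rfl⟩))
        · exact ih (k+1) (by omega) (by omega) e ht
        · obtain ⟨-, pl, -, hlast⟩ :=
            lobe_aux Cl i (!(τ i)) (occList Cl i) 0 (by rw [drop_zero]) (occList_ne_nil hocc i)
          rw [hlast, Option.some_inj] at ha
          subst ha
          rw [tailPath_head Cl τ (by omega : k + 1 ≤ n), Option.some_inj] at hb
          subst hb
          exact Or.inr (Or.inr (Or.inr ⟨_, _, _, _, rfl⟩))
    · rw [pathArcs_single] at he
      simp at he

/-! ### counting -/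

lemma occ_partition (Cl : Fin m → Fin 3 → Fin n × Bool) :
    ∀ l : List (Fin m × Fin 3),
      ∑ i : Fin n, (l.filter fun p => decide ((Cl p.1 p.2).1 = i)).length = l.length := by
  intro l
  induction l with
  | nil => simp
  | cons p l ih =>
    have hterm : ∀ i : Fin n,
        ((p :: l).filter fun q => decide ((Cl q.1 q.2).1 = i)).length =
        (if (Cl p.1 p.2).1 = i then 1 else 0) +
          (l.filter fun q => decide ((Cl q.1 q.2).1 = i)).length := by
      intro i
      by_cases h : (Cl p.1 p.2).1 = i <;> simp [List.filter_cons, h] <;> omega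
    rw [Finset.sum_congr rfl fun i _ => hterm i, Finset.sum_add_distrib, ih,
      Finset.sum_ite_eq]
    simp only [Finset.mem_univ, if_true, length_cons]
    omega

lemma sum_occ (Cl : Fin m → Fin 3 → Fin n × Bool) :
    ∑ i : Fin n, (occList Cl i).length = 3 * m := by
  have h1 := occ_partition Cl
    ((List.finRange m).flatMap fun j => (List.finRange 3).map fun t => (j, t))
  have h2 : (((List.finRange m).flatMap fun j =>
      (List.finRange 3).map fun t => (j, t))).length = 3 * m := by
    rw [List.length_flatMap, ← Fin.sum_univ_def]
    simp [Function.comp, Finset.sum_const, mul_comm]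
  exact h1.trans h2

lemma tailPath_cost_total (Cl : Fin m → Fin 3 → Fin n × Bool) (τ : Fin n → Bool)
    (hocc : ∀ i : Fin n, ∃ j t, (Cl j t).1 = i) :
    rPathCost (tailPath Cl τ 0) = 3 * m + n := by
  rw [tailPath_cost Cl τ hocc n 0 (by omega) (by omega), List.drop_zero,
    ← Fin.sum_univ_def, Finset.sum_add_distrib, sum_occ]
  simp [Finset.card_univ]

/-! ### the clause path L2 -/

lemma getLast?_cons_ne {α : Type*} (a : α) {l : List α} (h : l ≠ []) :
    (a :: l).getLast? = l.getLast? := by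
  rw [show a :: l = [a] ++ l from rfl, List.getLast?_append_of_ne_nil _ h]

def clausePath (Cl : Fin m → Fin 3 → Fin n × Bool) (sel : Fin m → Fin 3) (k : ℕ) :
    List (RNode n m) :=
  if h : k < m then
    RNode.y ⟨k, h⟩ ::
    RNode.u ⟨k, h⟩ (sel ⟨k, h⟩) ((Cl ⟨k, h⟩ (sel ⟨k, h⟩)).2) ::
    RNode.v ⟨k, h⟩ (sel ⟨k, h⟩) ((Cl ⟨k, h⟩ (sel ⟨k, h⟩)).2) ::
    RNode.z ⟨k, h⟩ ::
    clausePath Cl sel (k + 1)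
  else [RNode.w (Fin.last n)]
termination_by m - k

lemma clausePath_ne_nil (Cl : Fin m → Fin 3 → Fin n × Bool) (sel : Fin m → Fin 3)
    (k : ℕ) : clausePath Cl sel k ≠ [] := by
  rw [clausePath]; split <;> simp

lemma clausePath_chain (Cl : Fin m → Fin 3 → Fin n × Bool) (sel : Fin m → Fin 3) :
    ∀ d k, m - k ≤ d → List.Chain' (RArc Cl) (clausePath Cl sel k) := by
  intro d; induction d with
  | zero => intro k h; rw [clausePath, dif_neg (by omega)]; exact isChain_singleton _
  | succ d ih =>
    intro k h
    rw [clausePath]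
    split
    · next hk =>
      refine isChain_cons_cons.2 ⟨RArc.yu _ _, ?_⟩
      refine isChain_cons_cons.2 ⟨RArc.seg _ _ _, ?_⟩
      refine isChain_cons_cons.2 ⟨RArc.vz _ _, ?_⟩
      refine isChain_cons.2 ⟨?_, ih (k+1) (by omega)⟩
      intro ynode hy
      by_cases h2 : k + 1 < m
      · rw [clausePath, dif_pos h2, head?_cons] at hy
        simp only [Option.mem_def, Option.some_inj] at hy
        subst hy
        exact RArc.zy ⟨k, hk⟩ ⟨k+1, h2⟩ rfl
      · rw [clausePath, dif_neg h2, head?_cons] at hy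
        simp only [Option.mem_def, Option.some_inj] at hy
        subst hy
        exact RArc.zf ⟨k, hk⟩ (show k = m - 1 by omega)
    · exact isChain_singleton _

lemma clausePath_getLast (Cl : Fin m → Fin 3 → Fin n × Bool) (sel : Fin m → Fin 3) :
    ∀ d k, m - k ≤ d →
      (clausePath Cl sel k).getLast? = some (RNode.w (Fin.last n)) := by
  intro d; induction d with
  | zero => intro k h; rw [clausePath, dif_neg (by omega)]; rfl
  | succ d ih =>
    intro k h
    rw [clausePath]
    split
    · next hk =>
      rw [getLast?_cons_ne _ (by simp), getLast?_cons_ne _ (by simp),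
        getLast?_cons_ne _ (by simp), getLast?_cons_ne _ (clausePath_ne_nil Cl sel (k+1))]
      exact ih (k+1) (by omega)
    · rfl

lemma clausePath_mem (Cl : Fin m → Fin 3 → Fin n × Bool) (sel : Fin m → Fin 3) :
    ∀ d k, m - k ≤ d → ∀ x ∈ clausePath Cl sel k,
      x = RNode.w (Fin.last n) ∨
      ∃ j : Fin m, k ≤ (j : ℕ) ∧ (x = RNode.y j ∨ x = RNode.z j ∨
        x = RNode.u j (sel j) ((Cl j (sel j)).2) ∨
        x = RNode.v j (sel j) ((Cl j (sel j)).2)) := by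
  intro d; induction d with
  | zero =>
    intro k h x hx
    rw [clausePath, dif_neg (by omega)] at hx
    simp only [mem_singleton] at hx
    exact Or.inl hx
  | succ d ih =>
    intro k h x hx
    rw [clausePath] at hx
    split at hx
    · next hk =>
      simp only [mem_cons] at hx
      rcases hx with rfl | rfl | rfl | rfl | hx
      · exact Or.inr ⟨⟨k, hk⟩, le_refl _, Or.inl rfl⟩
      · exact Or.inr ⟨⟨k, hk⟩, le_refl _, Or.inr (Or.inr (Or.inl rfl))⟩
      · exact Or.inr ⟨⟨k, hk⟩, le_refl _, Or.inr (Or.inr (Or.inr rfl))⟩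
      · exact Or.inr ⟨⟨k, hk⟩, le_refl _, Or.inr (Or.inl rfl)⟩
      · rcases ih (k+1) (by omega) x hx with h' | ⟨j, hj, h'⟩
        · exact Or.inl h'
        · exact Or.inr ⟨j, by omega, h'⟩
    · simp only [mem_singleton] at hx
      exact Or.inl hx

lemma clausePath_nodup (Cl : Fin m → Fin 3 → Fin n × Bool) (sel : Fin m → Fin 3) :
    ∀ d k, m - k ≤ d → (clausePath Cl sel k).Nodup := by
  intro d; induction d with
  | zero => intro k h; rw [clausePath, dif_neg (by omega)]; simp
  | succ d ih =>
    intro k h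
    rw [clausePath]
    split
    · next hk =>
      have notmem : ∀ x : RNode n m, x ∈ clausePath Cl sel (k+1) →
          (x = RNode.y ⟨k, hk⟩ ∨
           x = RNode.u ⟨k, hk⟩ (sel ⟨k, hk⟩) ((Cl ⟨k, hk⟩ (sel ⟨k, hk⟩)).2) ∨
           x = RNode.v ⟨k, hk⟩ (sel ⟨k, hk⟩) ((Cl ⟨k, hk⟩ (sel ⟨k, hk⟩)).2) ∨
           x = RNode.z ⟨k, hk⟩) → False := by
        intro x hx hx'
        rcases clausePath_mem Cl sel d (k+1) (by omega) x hx with h' | ⟨j, hj, h'⟩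
        · subst h'
          rcases hx' with h'' | h'' | h'' | h'' <;> cases h''
        · rcases h' with rfl | rfl | rfl | rfl <;> rcases hx' with h'' | h'' | h'' | h'' <;>
            first
            | (have h3 : j = (⟨k, hk⟩ : Fin m) := by
                 first
                 | exact RNode.y.inj h''
                 | exact RNode.z.inj h''
                 | exact (RNode.u.inj h'').1
                 | exact (RNode.v.inj h'').1
               have h4 : (j : ℕ) = k := congrArg Fin.val h3
               omega)
            | exact absurd h'' (by simp)
      refine nodup_cons.2 ⟨?_, nodup_cons.2 ⟨?_, nodup_cons.2 ⟨?_,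
        nodup_cons.2 ⟨?_, ih (k+1) (by omega)⟩⟩⟩⟩
      · simp only [mem_cons]
        rintro (h' | h' | h' | h')
        · cases h'
        · cases h'
        · cases h'
        · exact notmem _ h' (Or.inl rfl)
      · simp only [mem_cons]
        rintro (h' | h' | h')
        · cases h'
        · cases h'
        · exact notmem _ h' (Or.inr (Or.inl rfl))
      · simp only [mem_cons]
        rintro (h' | h')
        · cases h'
        · exact notmem _ h' (Or.inr (Or.inr (Or.inl rfl)))
      · intro h'
        exact notmem _ h' (Or.inr (Or.inr (Or.inr rfl)))
    · simp

lemma clausePath_cost (Cl : Fin m → Fin 3 → Fin n × Bool) (sel : Fin m → Fin 3) :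
    ∀ d k, m - k ≤ d → rPathCost (clausePath Cl sel k) = 0 := by
  intro d; induction d with
  | zero => intro k h; rw [clausePath, dif_neg (by omega)]; simp [rPathCost, pathArcs]
  | succ d ih =>
    intro k h
    rw [clausePath]
    split
    · next hk =>
      obtain ⟨r, R', hR⟩ := List.exists_cons_of_ne_nil (clausePath_ne_nil Cl sel (k+1))
      rw [hR, rPathCost_cons_cons, rPathCost_cons_cons, rPathCost_cons_cons,
        rPathCost_cons_cons]
      have h1 : rcost ((RNode.y (⟨k, hk⟩ : Fin m) : RNode n m),
          RNode.u ⟨k, hk⟩ (sel ⟨k, hk⟩) ((Cl ⟨k, hk⟩ (sel ⟨k, hk⟩)).2)) = 0 := rfl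
      have h2 : rcost ((RNode.u (⟨k, hk⟩ : Fin m) (sel ⟨k, hk⟩) ((Cl ⟨k, hk⟩ (sel ⟨k, hk⟩)).2) : RNode n m),
          RNode.v ⟨k, hk⟩ (sel ⟨k, hk⟩) ((Cl ⟨k, hk⟩ (sel ⟨k, hk⟩)).2)) = 0 := rfl
      have h3 : rcost ((RNode.v (⟨k, hk⟩ : Fin m) (sel ⟨k, hk⟩) ((Cl ⟨k, hk⟩ (sel ⟨k, hk⟩)).2) : RNode n m),
          RNode.z ⟨k, hk⟩) = 0 := rfl
      have h4 : rcost ((RNode.z (⟨k, hk⟩ : Fin m) : RNode n m), r) = 0 := by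
        cases r <;> rfl
      have h5 := ih (k+1) (by omega)
      rw [hR] at h5
      rw [h1, h2, h3, h4, h5]
    · simp [rPathCost, pathArcs]

lemma clausePath_arcs (Cl : Fin m → Fin 3 → Fin n × Bool) (sel : Fin m → Fin 3) :
    ∀ d k, m - k ≤ d → ∀ e ∈ pathArcs (clausePath Cl sel k),
      (∃ j t b, e = (RNode.y j, RNode.u j t b)) ∨
      (∃ j : Fin m, e = (RNode.u j (sel j) ((Cl j (sel j)).2),
        RNode.v j (sel j) ((Cl j (sel j)).2))) ∨
      (∃ j t b j', e = (RNode.v j t b, RNode.z j')) ∨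
      (∃ j x, e = (RNode.z j, x)) := by
  intro d; induction d with
  | zero =>
    intro k h e he
    rw [clausePath, dif_neg (by omega), pathArcs_single] at he
    simp at he
  | succ d ih =>
    intro k h e he
    rw [clausePath] at he
    split at he
    · next hk =>
      rw [pathArcs_cons_cons, pathArcs_cons_cons, pathArcs_cons_cons] at he
      simp only [mem_cons] at he
      rcases he with rfl | rfl | rfl | he
      · exact Or.inl ⟨_, _, _, rfl⟩
      · exact Or.inr (Or.inl ⟨_, rfl⟩)
      · exact Or.inr (Or.inr (Or.inl ⟨_, _, _, _, rfl⟩))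
      · rcases mem_pathArcs_cons_elim he with ⟨x, hx, rfl⟩ | he
        · exact Or.inr (Or.inr (Or.inr ⟨_, _, rfl⟩))
        · exact ih (k+1) (by omega) e he
    · rw [pathArcs_single] at he
      simp at he

lemma clausePath_arc_mem (Cl : Fin m → Fin 3 → Fin n × Bool) (sel : Fin m → Fin 3) :
    ∀ d k (j : Fin m), m - k ≤ d → k ≤ (j : ℕ) →
      (RNode.u j (sel j) ((Cl j (sel j)).2), RNode.v j (sel j) ((Cl j (sel j)).2)) ∈
        pathArcs (clausePath Cl sel k) := by
  intro d; induction d with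
  | zero => intro k j h1 h2; have := j.isLt; omega
  | succ d ih =>
    intro k j h1 h2
    have hk : k < m := lt_of_le_of_lt h2 j.isLt
    rw [clausePath, dif_pos hk, pathArcs_cons_cons, pathArcs_cons_cons,
      pathArcs_cons_cons]
    by_cases hkj : (j : ℕ) = k
    · obtain rfl : j = ⟨k, hk⟩ := Fin.ext hkj
      exact mem_cons.2 (Or.inr (mem_cons.2 (Or.inl rfl)))
    · refine mem_cons.2 (Or.inr (mem_cons.2 (Or.inr (mem_cons.2 (Or.inr ?_)))))
      exact mem_pathArcs_cons _ (ih (k+1) j (by omega) (by omega))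

end Stmt14Aux

open Stmt14Aux in

/-- if the 3-SAT formula `F = F_1 ∧ … ∧ F_m` (clause `j`, slot
`t` holding literal `Cl j t = (variable, polarity)`) is satisfied by the
assignment `τ`, then the reduction graph contains two arc-disjoint s-f paths:
`L1` of cost `3m + n`, traversing in each lobe exactly the side opposite to
the satisfied literals (lower side iff `τ` is true, i.e. side `!(τ i)`), and
`L2` of cost `0`, traversing the clause arcs and, for each clause, the segment
of a satisfied literal; their total cost is `3m + n`. -/
theorem stmt14 (n m : ℕ) (hm : 0 < m)
    (Cl : Fin m → Fin 3 → Fin n × Bool)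
    (hocc : ∀ i : Fin n, ∃ j t, (Cl j t).1 = i)
    (τ : Fin n → Bool)
    (hsat : ∀ j : Fin m, ∃ t : Fin 3, (Cl j t).2 = τ (Cl j t).1) :
    ∃ L1 L2 : List (RNode n m),
      IsSFPath Cl L1 ∧ IsSFPath Cl L2 ∧
      (pathArcs L1).Disjoint (pathArcs L2) ∧
      rPathCost L1 = 3 * m + n ∧ rPathCost L2 = 0 ∧
      (∀ (j : Fin m) (t : Fin 3) (b : Bool),
        (RNode.u j t b, RNode.v j t b) ∈ pathArcs L1 → b = !(τ (Cl j t).1)) ∧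
      (∀ j : Fin m, ∃ t : Fin 3, (Cl j t).2 = τ (Cl j t).1 ∧
        (RNode.u j t (Cl j t).2, RNode.v j t (Cl j t).2) ∈ pathArcs L2) := by

  classical
  have hn : 0 < n := by have := ((Cl ⟨0, hm⟩ 0).1).isLt; omega
  set sel : Fin m → Fin 3 := fun j => (hsat j).choose with hseldef
  have hsel : ∀ j, (Cl j (sel j)).2 = τ (Cl j (sel j)).1 := fun j => (hsat j).choose_spec
  refine ⟨tailPath Cl τ 0, RNode.w 0 :: clausePath Cl sel 0, ?_, ?_, ?_, ?_, ?_, ?_, ?_⟩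
  · refine ⟨tailPath_chain Cl τ hocc n 0 (by omega) (by omega), ?_, ?_, ?_⟩
    · rw [tailPath_head Cl τ (by omega : 0 ≤ n)]
      have h00 : (⟨0, by omega⟩ : Fin (n+1)) = 0 := Fin.ext (by simp)
      rw [h00]
    · exact tailPath_getLast Cl τ n 0 (by omega)
    · exact tailPath_nodup Cl τ n 0 (by omega) (by omega)
  · refine ⟨?_, ?_, ?_, ?_⟩
    · refine List.isChain_cons.2 ⟨?_, clausePath_chain Cl sel m 0 (by omega)⟩
      intro ynode hy
      rw [clausePath, dif_pos hm, List.head?_cons] at hy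
      simp only [Option.mem_def, Option.some_inj] at hy
      subst hy
      exact RArc.sy ⟨0, hm⟩ rfl
    · rfl
    · rw [getLast?_cons_ne _ (clausePath_ne_nil Cl sel 0)]
      exact clausePath_getLast Cl sel m 0 (by omega)
    · refine List.nodup_cons.2 ⟨?_, clausePath_nodup Cl sel m 0 (by omega)⟩
      intro hc
      rcases clausePath_mem Cl sel m 0 (by omega) _ hc with h' | ⟨j, -, h' | h' | h' | h'⟩
      · have := congrArg Fin.val (RNode.w.inj h')
        simp at this
        omega
      all_goals cases h'
  · intro e h1' h2'
    have h1s := tailPath_arcs Cl τ hocc n 0 (by omega) (by omega) e h1'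
    rcases mem_pathArcs_cons_elim h2' with ⟨x, hx, rfl⟩ | h2''
    · rw [clausePath, dif_pos hm, List.head?_cons, Option.some_inj] at hx
      subst hx
      rcases h1s with ⟨iv, j, t, b, hh⟩ | ⟨j, t, hh⟩ | ⟨j, t, b, j', t', b', hh⟩ |
        ⟨j, t, b, iv, hh⟩ <;> simp [Prod.ext_iff] at hh
    · have h2s := clausePath_arcs Cl sel m 0 (by omega) e h2''
      rcases h1s with ⟨iv, j, t, b, rfl⟩ | ⟨j, t, rfl⟩ | ⟨j, t, b, j', t', b', rfl⟩ |
        ⟨j, t, b, iv, rfl⟩ <;>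
        rcases h2s with ⟨j2, t2, b2, hh⟩ | ⟨j2, hh⟩ | ⟨j2, t2, b2, j2', hh⟩ | ⟨j2, x, hh⟩ <;>
        simp at hh
      obtain ⟨rfl, rfl, hb⟩ := hh
      rw [hsel j] at hb
      simp at hb
  · exact tailPath_cost_total Cl τ hocc
  · have hhead : (clausePath Cl sel 0).head? = some (RNode.y ⟨0, hm⟩) := by
      rw [clausePath, dif_pos hm, List.head?_cons]
    rw [rPathCost_cons_of_head _ _ hhead,
      clausePath_cost Cl sel m 0 (by omega)]
    rfl
  · intro j t b hmem
    rcases tailPath_arcs Cl τ hocc n 0 (by omega) (by omega) _ hmem with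
      ⟨iv, j2, t2, b2, hh⟩ | ⟨j2, t2, hh⟩ | ⟨j2, t2, b2, j2', t2', b2', hh⟩ |
      ⟨j2, t2, b2, iv, hh⟩
    · exact absurd hh (by simp)
    · obtain ⟨h3, -⟩ := Prod.mk.inj hh
      obtain ⟨rfl, rfl, rfl⟩ := RNode.u.inj h3
      rfl
    · exact absurd hh (by simp)
    · exact absurd hh (by simp)
  · intro j
    refine ⟨sel j, hsel j, ?_⟩
    exact mem_pathArcs_cons _ (clausePath_arc_mem Cl sel m 0 j (by omega) (by omega))
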